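/- In simply-laced type with ϖ_k minuscule and J = I \ {k}, the minimal coset representative of w_J s_k (w_J the longest element of W_J) equals the minimal coset representative of s_θ, the reflection in the highest root θ. -/

import Mathlib

/-- An axiomatized finite crystallographic root system datum, with weight/root
space `V` over `ℚ`, simple roots `α i`, an invariant inner product `B`,
Weyl group `W` acting faithfully on `V`, and the set of roots `isRoot`. -/
structure RootSystemData (I : Type) [Fintype I] [DecidableEq I] where
  V : Type
  [instAddCommGroup : AddCommGroup V]
  [instModule : Module ℚ V]
  W : Type
  [instGroup : Group W]
  α : I → V
  B : V →ₗ[ℚ] V →ₗ[ℚ] ℚ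
  toLin : W →* Module.End ℚ V
  s : I → W
  isRoot : V → Prop
  B_symm : ∀ x y, B x y = B y x
  B_pos : ∀ β, isRoot β → 0 < B β β
  B_inv : ∀ (w : W) (x y : V), B (toLin w x) (toLin w y) = B x y
  root_simple : ∀ i, isRoot (α i)
  root_inv : ∀ (w : W) (β : V), isRoot β → isRoot (toLin w β)
  root_gen : ∀ β, isRoot β → ∃ (w : W) (i : I), β = toLin w (α i)
  root_finite : (setOf isRoot).Finite
  indep : LinearIndependent ℚ α
  s_act : ∀ i x, toLin (s i) x = x - (2 * B (α i) x / B (α i) (α i)) • α i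
  gen : Subgroup.closure (Set.range s) = ⊤
  faithful : Function.Injective toLin
  root_int : ∀ β, isRoot β → ∃ c : I → ℤ, β = ∑ i, (c i : ℚ) • α i
  pos_or_neg : ∀ β, isRoot β →
    (∃ c : I → ℕ, β = ∑ i, (c i : ℚ) • α i) ∨ (∃ c : I → ℕ, -β = ∑ i, (c i : ℚ) • α i)

attribute [instance] RootSystemData.instAddCommGroup RootSystemData.instModule
  RootSystemData.instGroup

namespace RootSystemData

variable {I : Type} [Fintype I] [DecidableEq I] (R : RootSystemData I)

/-- `β` is a positive root. -/
def IsPos (β : R.V) : Prop :=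
  R.isRoot β ∧ ∃ c : I → ℕ, β = ∑ i, (c i : ℚ) • R.α i

/-- The finite set of positive roots. -/
noncomputable def posFinset : Finset R.V :=
  (Set.Finite.subset R.root_finite (fun _ hb => hb.1) : (setOf R.IsPos).Finite).toFinset

/-- Half the sum of the positive roots. -/
noncomputable def ρ : R.V := (2 : ℚ)⁻¹ • ∑ β ∈ R.posFinset, β

/-- The pairing `⟨x, β∨⟩` of `x` with the coroot of `β`. -/
noncomputable def coroot (β x : R.V) : ℚ := 2 * R.B β x / R.B β β

open Classical in
/-- The reflection `s_β ∈ W` in a root `β`. -/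
noncomputable def refl (β : R.V) : R.W :=
  if h : R.isRoot β then
    (R.root_gen β h).choose * R.s (R.root_gen β h).choose_spec.choose *
      (R.root_gen β h).choose⁻¹
  else 1

/-- The length function on the Weyl group. -/
noncomputable def len (w : R.W) : ℕ :=
  sInf {n | ∃ l : List I, l.length = n ∧ (l.map R.s).prod = w}

/-- Bruhat order: generated by multiplication by reflections which increases length. -/
def bruhatLE : R.W → R.W → Prop :=
  Relation.ReflTransGen (fun u v => (∃ β, R.IsPos β ∧ v = R.refl β * u) ∧ R.len u < R.len v)

def bruhatLT (u v : R.W) : Prop := R.bruhatLE u v ∧ u ≠ v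

/-- The parabolic subgroup `W_J`. -/
def WJ (J : Set I) : Subgroup R.W := Subgroup.closure (R.s '' J)

/-- `w` is a minimal-length representative of its coset `w W_J`. -/
def IsMinRep (J : Set I) (w : R.W) : Prop :=
  ∀ z ∈ R.WJ J, R.len w ≤ R.len (w * z)

/-- `β ∈ Δ⁺_J`: positive roots in the span of the simple roots indexed by `J`. -/
def posJ (J : Set I) (β : R.V) : Prop :=
  R.IsPos β ∧ β ∈ Submodule.span ℚ (R.α '' J)

/-- A Bruhat edge `x → x s_β` in the quantum Bruhat graph. -/
def BruhatEdge (x : R.W) (β : R.V) : Prop :=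
  R.IsPos β ∧ R.len (x * R.refl β) = R.len x + 1

/-- A quantum edge `x → x s_β` in the quantum Bruhat graph. -/
def QuantumEdge (x : R.W) (β : R.V) : Prop :=
  R.IsPos β ∧ (R.len (x * R.refl β) : ℚ) = R.len x + 1 - 2 * R.coroot β R.ρ

/-- An edge of the quantum Bruhat graph. -/
def QBGEdge (x : R.W) (β : R.V) : Prop := R.BruhatEdge x β ∨ R.QuantumEdge x β

/-- A quantum root: `ℓ(s_β) = 2⟨ρ, β∨⟩ - 1`. -/
def IsQuantumRoot (β : R.V) : Prop :=
  R.IsPos β ∧ (R.len (R.refl β) : ℚ) = 2 * R.coroot β R.ρ - 1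

/-- A long root (maximal squared length); in simply-laced type all roots are long. -/
def IsLong (β : R.V) : Prop :=
  R.isRoot β ∧ ∀ γ, R.isRoot γ → R.B γ γ ≤ R.B β β

/-- A short root. -/
def IsShort (β : R.V) : Prop := R.isRoot β ∧ ¬ R.IsLong β

def IsSimplyLaced : Prop :=
  ∀ β γ, R.isRoot β → R.isRoot γ → R.B β β = R.B γ γ

def IsIrreducible : Prop :=
  Nonempty I ∧ ∀ J : Set I,
    (∀ i ∈ J, ∀ j ∉ J, R.B (R.α i) (R.α j) = 0) → J = ∅ ∨ J = Set.univ

/-- `θ` is the highest root. -/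
def IsHighestRoot (θ : R.V) : Prop :=
  R.IsPos θ ∧ ∀ β, R.IsPos β → ∃ c : I → ℕ, θ - β = ∑ i, (c i : ℚ) • R.α i

/-- `ϖ` is the fundamental weight associated to `k`. -/
def IsFundamental (k : I) (ϖ : R.V) : Prop :=
  ∀ i, R.coroot (R.α i) ϖ = if i = k then 1 else 0

/-- `ϖ` is minuscule. -/
def IsMinuscule (ϖ : R.V) : Prop :=
  ∀ β, R.isRoot β → R.coroot β ϖ ∈ ({-1, 0, 1} : Set ℚ)

/-- A strict total order on `Δ⁺` which is a reflection (convex) order. -/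
def IsReflectionOrder (lt : R.V → R.V → Prop) : Prop :=
  (∀ β, ¬ lt β β) ∧ (∀ a b c, lt a b → lt b c → lt a c) ∧
  (∀ β γ, R.IsPos β → R.IsPos γ → β ≠ γ → lt β γ ∨ lt γ β) ∧
  (∀ β γ, R.IsPos β → R.IsPos γ → R.IsPos (β + γ) →
    (lt β (β + γ) ∧ lt (β + γ) γ) ∨ (lt γ (β + γ) ∧ lt (β + γ) β))

end RootSystemData

open RootSystemData in
/-- A directed path in the quantum Bruhat graph with the given list of labels. -/
def QBGPath {I : Type} [Fintype I] [DecidableEq I] (R : RootSystemData I) :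
    R.W → List R.V → R.W → Prop
  | x, [], y => x = y
  | x, β :: l, y => R.QBGEdge x β ∧ QBGPath R (x * R.refl β) l y

open RootSystemData in
/-- A directed path in the Bruhat graph (Bruhat edges only). -/
def BGPath {I : Type} [Fintype I] [DecidableEq I] (R : RootSystemData I) :
    R.W → List R.V → R.W → Prop
  | x, [], y => x = y
  | x, β :: l, y => R.BruhatEdge x β ∧ BGPath R (x * R.refl β) l y

/-- The Cartan pairing `⟨α_j, α_i∨⟩` of type `B_n` (Bourbaki labelling, shifted
to be 0-based: the short simple root is the last one, index `n-1`). -/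
def BCartan (n : ℕ) (i j : Fin n) : ℚ :=
  if i = j then 2
  else if (i : ℕ) = n - 1 ∧ (j : ℕ) + 1 = n - 1 then -2
  else if ((i : ℕ) + 1 = j ∨ (j : ℕ) + 1 = i) then -1
  else 0

/-- `R` is of type `B_n` (via the identification `e` of its index set with `Fin n`). -/
def IsTypeB {I : Type} [Fintype I] [DecidableEq I] (R : RootSystemData I)
    (n : ℕ) (e : I ≃ Fin n) : Prop :=
  2 ≤ n ∧ ∀ i j, R.coroot (R.α i) (R.α j) = BCartan n (e i) (e j)

/-- The product `s_{a+1} s_{a+2} ⋯ s_{b+1}` (0-based: indices `a, a+1, …, b`). -/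
noncomputable def sSeq {n : ℕ} (hn : 0 < n) (R : RootSystemData (Fin n)) (a b : ℕ) : R.W :=
  ((List.range (b + 1 - a)).map (fun t => R.s ⟨(a + t) % n, Nat.mod_lt _ hn⟩)).prod

/-- The sum `α_{a+1} + ⋯ + α_b` of simple roots (0-based half-open interval `[a, b)`). -/
def aSum {n : ℕ} (hn : 0 < n) (R : RootSystemData (Fin n)) (a b : ℕ) : R.V :=
  ∑ t ∈ Finset.Ico a b, R.α ⟨t % n, Nat.mod_lt _ hn⟩

namespace RootSystemData

variable {I : Type} [Fintype I] [DecidableEq I] (R : RootSystemData I)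

lemma coeff_unique {c d : I → ℚ} (h : ∑ i, c i • R.α i = ∑ i, d i • R.α i) : c = d := by
  funext i
  have h2 : ∑ i, (c i - d i) • R.α i = 0 := by
    simp [sub_smul, Finset.sum_sub_distrib, h]
  have := Fintype.linearIndependent_iff.mp R.indep _ h2 i
  linarith

lemma root_ne_zero {β : R.V} (h : R.isRoot β) : β ≠ 0 := by
  intro h0
  have := R.B_pos β h
  rw [h0] at this
  simp at this

lemma toLin_mul (u v : R.W) (x : R.V) :
    R.toLin (u * v) x = R.toLin u (R.toLin v x) := by
  rw [map_mul, Module.End.mul_apply]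

lemma toLin_one (x : R.V) : R.toLin 1 x = x := by
  rw [map_one, Module.End.one_apply]

lemma toLin_inv (w : R.W) (x : R.V) : R.toLin w⁻¹ (R.toLin w x) = x := by
  rw [← R.toLin_mul, inv_mul_cancel, R.toLin_one]

lemma toLin_inv' (w : R.W) (x : R.V) : R.toLin w (R.toLin w⁻¹ x) = x := by
  rw [← R.toLin_mul, mul_inv_cancel, R.toLin_one]

lemma B_simple_ne (i : I) : R.B (R.α i) (R.α i) ≠ 0 :=
  ne_of_gt (R.B_pos _ (R.root_simple i))

lemma s_act_act (i : I) (x : R.V) : R.toLin (R.s i) (R.toLin (R.s i) x) = x := by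
  have hB := R.B_simple_ne i
  rw [R.s_act, R.s_act]
  have h1 : R.B (R.α i) (x - (2 * R.B (R.α i) x / R.B (R.α i) (R.α i)) • R.α i)
      = - R.B (R.α i) x := by
    rw [map_sub, map_smul, smul_eq_mul]
    field_simp
    ring
  rw [h1]
  have h2 : 2 * -R.B (R.α i) x / R.B (R.α i) (R.α i)
      = -(2 * R.B (R.α i) x / R.B (R.α i) (R.α i)) := by ring
  rw [h2, neg_smul, sub_neg_eq_add, sub_add_cancel]

lemma s_mul_self (i : I) : R.s i * R.s i = 1 := by
  apply R.faithful
  refine LinearMap.ext fun x => ?_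
  rw [map_mul, Module.End.mul_apply, map_one, Module.End.one_apply, R.s_act_act]

lemma s_inv (i : I) : (R.s i)⁻¹ = R.s i :=
  inv_eq_of_mul_eq_one_right (R.s_mul_self i)

lemma s_act_self (i : I) : R.toLin (R.s i) (R.α i) = -(R.α i) := by
  have hB := R.B_simple_ne i
  rw [R.s_act]
  have h2 : 2 * R.B (R.α i) (R.α i) / R.B (R.α i) (R.α i) = 2 := by field_simp
  rw [h2, two_smul]
  abel

lemma conj_act (w : R.W) (i : I) (x : R.V) :
    R.toLin (w * R.s i * w⁻¹) x = x - (2 * R.B (R.toLin w (R.α i)) x /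
      R.B (R.toLin w (R.α i)) (R.toLin w (R.α i))) • R.toLin w (R.α i) := by
  rw [R.toLin_mul, R.toLin_mul, R.s_act, map_sub, map_smul, R.toLin_inv']
  have e1 : R.B (R.α i) (R.toLin w⁻¹ x) = R.B (R.toLin w (R.α i)) x := by
    rw [← R.B_inv w (R.α i) (R.toLin w⁻¹ x), R.toLin_inv']
  have e2 : R.B (R.α i) (R.α i) = R.B (R.toLin w (R.α i)) (R.toLin w (R.α i)) :=
    (R.B_inv w _ _).symm
  rw [e1, e2]

lemma refl_apply {β : R.V} (h : R.isRoot β) (x : R.V) :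
    R.toLin (R.refl β) x = x - (2 * R.B β x / R.B β β) • β := by
  rw [refl, dif_pos h]
  have hspec : β = R.toLin (R.root_gen β h).choose (R.α (R.root_gen β h).choose_spec.choose) :=
    (R.root_gen β h).choose_spec.choose_spec
  rw [R.conj_act, ← hspec]

lemma refl_eq_conj (w : R.W) (i : I) :
    R.refl (R.toLin w (R.α i)) = w * R.s i * w⁻¹ := by
  have hroot : R.isRoot (R.toLin w (R.α i)) := R.root_inv w _ (R.root_simple i)
  apply R.faithful
  refine LinearMap.ext fun x => ?_
  rw [R.refl_apply hroot, R.conj_act]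


lemma isPos_simple (i : I) : R.IsPos (R.α i) := by
  refine ⟨R.root_simple i, fun j => if j = i then 1 else 0, ?_⟩
  simp [ite_smul, apply_ite (Nat.cast : ℕ → ℚ)]

lemma isRoot_neg {β : R.V} (h : R.isRoot β) : R.isRoot (-β) := by
  obtain ⟨w, i, rfl⟩ := R.root_gen β h
  have he : -(R.toLin w (R.α i)) = R.toLin (w * R.s i) (R.α i) := by
    rw [R.toLin_mul, R.s_act_self, map_neg]
  rw [he]
  exact R.root_inv _ _ (R.root_simple i)

lemma not_isPos_neg {β : R.V} (h1 : R.IsPos β) (h2 : R.IsPos (-β)) : False := by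
  obtain ⟨hr, c, hc⟩ := h1
  obtain ⟨_, d, hd⟩ := h2
  have h0 : ∑ i, ((c i : ℚ) + (d i : ℚ)) • R.α i = ∑ i, (0 : ℚ) • R.α i := by
    simp [add_smul, Finset.sum_add_distrib, ← hc, ← hd]
  have hcd := congrFun (R.coeff_unique h0)
  have hc0 : ∀ i, (c i : ℚ) = 0 := by
    intro i
    have h3 : (c i : ℚ) + (d i : ℚ) = 0 := hcd i
    have h1 : (0:ℚ) ≤ (c i : ℚ) := Nat.cast_nonneg _
    have h2 : (0:ℚ) ≤ (d i : ℚ) := Nat.cast_nonneg _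
    linarith
  apply R.root_ne_zero hr
  rw [hc]
  refine Finset.sum_eq_zero fun i _ => ?_
  rw [hc0 i, zero_smul]

lemma pos_or_negpos {β : R.V} (h : R.isRoot β) : R.IsPos β ∨ R.IsPos (-β) := by
  rcases R.pos_or_neg β h with ⟨c, hc⟩ | ⟨c, hc⟩
  · exact Or.inl ⟨h, c, hc⟩
  · exact Or.inr ⟨R.isRoot_neg h, c, hc⟩

lemma single_combo (k : I) (m : ℚ) :
    m • R.α k = ∑ t, (if t = k then m else 0) • R.α t := by
  simp [ite_smul]

lemma simple_perm (hsl : R.IsSimplyLaced) (i : I) {β : R.V} (hβ : R.IsPos β)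
    (hne : β ≠ R.α i) : R.IsPos (R.toLin (R.s i) β) := by
  obtain ⟨hr, c, hc⟩ := hβ
  by_cases hj : ∃ j, j ≠ i ∧ c j ≠ 0
  · obtain ⟨j, hji, hcj⟩ := hj
    rcases R.pos_or_negpos (R.root_inv (R.s i) β hr) with hp | hn
    · exact hp
    · exfalso
      obtain ⟨_, d, hd⟩ := hn
      rw [R.s_act i β] at hd
      set m : ℚ := 2 * R.B (R.α i) β / R.B (R.α i) (R.α i) with hm
      have h2 : β = m • R.α i - ∑ t, (d t : ℚ) • R.α t := by
        rw [← hd]; abel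
      have h3 : β = ∑ t, ((if t = i then m else 0) - (d t : ℚ)) • R.α t := by
        rw [h2, R.single_combo i]
        simp [sub_smul, Finset.sum_sub_distrib]
      have hco := congrFun (R.coeff_unique (hc.symm.trans h3)) j
      rw [if_neg hji] at hco
      have h4 : (1:ℚ) ≤ (c j : ℚ) := by exact_mod_cast Nat.one_le_iff_ne_zero.mpr hcj
      have h5 : (0:ℚ) ≤ (d j : ℚ) := Nat.cast_nonneg _
      simp at hco
      exact hcj hco.1
  · exfalso
    push_neg at hj
    have hβi : β = (c i : ℚ) • R.α i := by
      rw [hc, Finset.sum_eq_single i]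
      · intro b _ hb
        rw [hj b hb, Nat.cast_zero, zero_smul]
      · intro h; exact absurd (Finset.mem_univ i) h
    have hBB : R.B β β = (c i : ℚ) * (c i : ℚ) * R.B (R.α i) (R.α i) := by
      rw [hβi]
      simp only [map_smul, LinearMap.smul_apply, smul_eq_mul]
      ring
    have hsl2 : R.B β β = R.B (R.α i) (R.α i) := hsl β (R.α i) hr (R.root_simple i)
    have hBpos := R.B_pos _ (R.root_simple i)
    have hsq : (c i : ℚ) * (c i : ℚ) = 1 := by
      have := hsl2.symm.trans hBB
      have h6 : ((c i : ℚ) * (c i : ℚ) - 1) * R.B (R.α i) (R.α i) = 0 := by linarith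
      rcases mul_eq_zero.mp h6 with h | h
      · linarith
      · exact absurd h (ne_of_gt hBpos)
    have hcnn : (0:ℚ) ≤ (c i : ℚ) := Nat.cast_nonneg _
    have : (c i : ℚ) = 1 := by nlinarith
    exact hne (by rw [hβi, this, one_smul])


lemma prod_reverse (l : List I) :
    ((l.reverse.map R.s).prod) = ((l.map R.s).prod)⁻¹ := by
  induction l with
  | nil => simp
  | cons i t ih =>
    rw [List.reverse_cons, List.map_append, List.prod_append, ih, List.map_cons,
      List.prod_cons, List.map_cons, List.map_nil, List.prod_cons, List.prod_nil,
      mul_one, mul_inv_rev, R.s_inv]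

lemma exists_word (w : R.W) : ∃ l : List I, (l.map R.s).prod = w := by
  have hw : w ∈ Subgroup.closure (Set.range R.s) := by rw [R.gen]; trivial
  refine Subgroup.closure_induction ?_ ?_ ?_ ?_ hw
  · rintro x ⟨i, rfl⟩; exact ⟨[i], by simp⟩
  · exact ⟨[], rfl⟩
  · rintro x y _ _ ⟨l, rfl⟩ ⟨l', rfl⟩; exact ⟨l ++ l', by simp⟩
  · rintro x _ ⟨l, rfl⟩; exact ⟨l.reverse, R.prod_reverse l⟩

lemma len_le {w : R.W} {l : List I} (h : (l.map R.s).prod = w) :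
    R.len w ≤ l.length := Nat.sInf_le ⟨l, rfl, h⟩

lemma exists_reduced (w : R.W) :
    ∃ l : List I, l.length = R.len w ∧ (l.map R.s).prod = w := by
  have hne : {n | ∃ l : List I, l.length = n ∧ (l.map R.s).prod = w}.Nonempty := by
    obtain ⟨l, hl⟩ := R.exists_word w
    exact ⟨l.length, l, rfl, hl⟩
  exact Nat.sInf_mem hne

lemma len_inv (w : R.W) : R.len w⁻¹ = R.len w := by
  have key : ∀ v : R.W, R.len v⁻¹ ≤ R.len v := by
    intro v
    obtain ⟨l, hl, hp⟩ := R.exists_reduced v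
    have h2 : ((l.reverse.map R.s).prod) = v⁻¹ := by rw [R.prod_reverse, hp]
    have := R.len_le h2
    simpa [hl] using this
  have h2 := key w⁻¹
  rw [inv_inv] at h2
  exact le_antisymm (key w) h2

lemma refl_simple (i : I) : R.refl (R.α i) = R.s i := by
  have := R.refl_eq_conj 1 i
  rw [R.toLin_one] at this
  rw [this, one_mul, inv_one, mul_one]

lemma deletion (hsl : R.IsSimplyLaced) (l : List I) (j : I)
    (h : ¬ R.IsPos (R.toLin ((l.map R.s).prod) (R.α j))) :
    ∃ l' : List I, l'.length + 1 = l.length ∧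
      ((l'.map R.s).prod) = (l.map R.s).prod * R.s j := by
  induction l with
  | nil =>
    exfalso
    apply h
    rw [List.map_nil, List.prod_nil, R.toLin_one]
    exact R.isPos_simple j
  | cons i t ih =>
    by_cases hu : R.IsPos (R.toLin ((t.map R.s).prod) (R.α j))
    · have hne : R.toLin ((t.map R.s).prod) (R.α j) = R.α i := by
        by_contra hne
        apply h
        rw [List.map_cons, List.prod_cons, R.toLin_mul]
        exact R.simple_perm hsl i hu hne
      refine ⟨t, by simp, ?_⟩
      have hconj := R.refl_eq_conj ((t.map R.s).prod) j
      rw [hne, R.refl_simple] at hconj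
      rw [List.map_cons, List.prod_cons, hconj]
      rw [mul_assoc, mul_assoc, inv_mul_cancel_left, mul_assoc, R.s_mul_self, mul_one]
    · obtain ⟨t', ht', hp⟩ := ih hu
      refine ⟨i :: t', by simp [ht'], ?_⟩
      rw [List.map_cons, List.prod_cons, hp, List.map_cons, List.prod_cons, mul_assoc]


lemma len_lt_of_pos (hsl : R.IsSimplyLaced) {w : R.W} {j : I}
    (h : R.IsPos (R.toLin w (R.α j))) : R.len w < R.len (w * R.s j) := by
  obtain ⟨l, hl, hp⟩ := R.exists_reduced (w * R.s j)
  have hnot : ¬ R.IsPos (R.toLin ((l.map R.s).prod) (R.α j)) := by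
    rw [hp]
    intro hpos
    have he : R.toLin (w * R.s j) (R.α j) = -(R.toLin w (R.α j)) := by
      rw [R.toLin_mul, R.s_act_self, map_neg]
    rw [he] at hpos
    exact R.not_isPos_neg h hpos
  obtain ⟨l', hl', hp'⟩ := R.deletion hsl l j hnot
  have hw : (l'.map R.s).prod = w := by
    rw [hp', hp, mul_assoc, R.s_mul_self, mul_one]
  have := R.len_le hw
  omega

lemma WJ_word {J : Set I} {w : R.W} (h : w ∈ R.WJ J) :
    ∃ l : List I, (∀ i ∈ l, i ∈ J) ∧ (l.map R.s).prod = w := by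
  refine Subgroup.closure_induction ?_ ?_ ?_ ?_ h
  · rintro x ⟨j, hj, rfl⟩
    exact ⟨[j], by simpa using hj, by simp⟩
  · exact ⟨[], by simp, rfl⟩
  · rintro x y _ _ ⟨l, hl, rfl⟩ ⟨l', hl', rfl⟩
    refine ⟨l ++ l', ?_, by simp⟩
    intro i hi
    rcases List.mem_append.mp hi with h' | h'
    · exact hl i h'
    · exact hl' i h'
  · rintro x _ ⟨l, hl, rfl⟩
    exact ⟨l.reverse, fun i hi => hl i (List.mem_reverse.mp hi), R.prod_reverse l⟩

lemma word_support {k : I} (l : List I) (hl : ∀ i ∈ l, i ≠ k) (v : R.V) :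
    ∃ q : I → ℚ, q k = 0 ∧ R.toLin ((l.map R.s).prod) v = v + ∑ t, q t • R.α t := by
  induction l with
  | nil => exact ⟨0, rfl, by simp⟩
  | cons i t ih =>
    obtain ⟨q, hqk, hq⟩ := ih (fun i' hi' => hl i' (List.mem_cons_of_mem _ hi'))
    have hik : i ≠ k := hl i List.mem_cons_self
    obtain ⟨m, hm⟩ : ∃ m : ℚ, R.toLin (R.s i) (R.toLin ((t.map R.s).prod) v) =
        R.toLin ((t.map R.s).prod) v - m • R.α i := ⟨_, R.s_act i _⟩
    refine ⟨fun t' => q t' + if t' = i then -m else 0, by simp [hqk, (Ne.symm hik : ¬ k = i)], ?_⟩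
    rw [List.map_cons, List.prod_cons, R.toLin_mul, hm, hq]
    have hsum : ∑ t', (q t' + if t' = i then -m else 0) • R.α t'
        = (∑ t', q t' • R.α t') + (-m) • R.α i := by
      simp [add_smul, Finset.sum_add_distrib, ite_smul]
    rw [hsum]
    module


end RootSystemData

/-- In simply-laced type with `ϖ_k` minuscule, the minimal coset representative
of `w_J s_k` equals that of `s_θ` (i.e. they lie in the same coset of `W_J`). -/
theorem stmt11 {I : Type} [Fintype I] [DecidableEq I] (R : RootSystemData I)
    (hirr : R.IsIrreducible) (hsl : R.IsSimplyLaced)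
    (k : I) (ϖ : R.V) (hfund : R.IsFundamental k ϖ) (hmin : R.IsMinuscule ϖ)
    (J : Set I) (hJ : J = {i | i ≠ k})
    (wJ : R.W) (hwJ : wJ ∈ R.WJ J ∧ ∀ z ∈ R.WJ J, R.len z ≤ R.len wJ)
    (θ : R.V) (hθ : R.IsHighestRoot θ) :
    (wJ * R.s k)⁻¹ * R.refl θ ∈ R.WJ J := by
  subst hJ
  obtain ⟨hwJmem, hwJmax⟩ := hwJ
  obtain ⟨⟨hθr, c, hc⟩, hhigh⟩ := hθ
  have hBk := R.B_pos _ (R.root_simple k)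
  -- pairing of simple roots with ϖ
  have hBi : ∀ i, R.B (R.α i) ϖ = (if i = k then R.B (R.α k) (R.α k) / 2 else 0) := by
    intro i
    have hf := hfund i
    unfold RootSystemData.coroot at hf
    have hii : R.B (R.α i) (R.α i) = R.B (R.α k) (R.α k) :=
      hsl _ _ (R.root_simple i) (R.root_simple k)
    rw [hii] at hf
    by_cases h : i = k
    · rw [if_pos h] at hf ⊢
      field_simp at hf
      linarith
    · rw [if_neg h] at hf ⊢
      field_simp at hf
      linarith
  have hBθϖ : R.B θ ϖ = (c k : ℚ) * (R.B (R.α k) (R.α k) / 2) := by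
    rw [hc, map_sum, LinearMap.sum_apply]
    simp only [map_smul, LinearMap.smul_apply, smul_eq_mul, hBi, mul_ite, mul_zero]
    rw [Finset.sum_ite_eq' Finset.univ k (fun i => (c i : ℚ) * (R.B (R.α k) (R.α k) / 2))]
    rw [if_pos (Finset.mem_univ k)]
  have hBθθ : R.B θ θ = R.B (R.α k) (R.α k) := hsl _ _ hθr (R.root_simple k)
  have hck' : R.coroot θ ϖ = (c k : ℚ) := by
    unfold RootSystemData.coroot
    rw [hBθϖ, hBθθ]
    field_simp
  -- c k ≥ 1
  obtain ⟨d, hd⟩ := hhigh (R.α k) (R.isPos_simple k)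
  have hθd : θ = ∑ i, ((d i : ℚ) + if i = k then 1 else 0) • R.α i := by
    have h1 : θ = (∑ i, (d i : ℚ) • R.α i) + R.α k := by rw [← hd]; abel
    rw [h1]
    simp [add_smul, Finset.sum_add_distrib, ite_smul, Finset.sum_ite_eq']
  have hcd := congrFun (R.coeff_unique (hc.symm.trans hθd)) k
  simp at hcd
  have hck1 : (1:ℚ) ≤ (c k : ℚ) := by
    have := Nat.cast_nonneg (α := ℚ) (d k)
    linarith
  -- c k = 1
  have hck : (c k : ℚ) = 1 := by
    have hm := hmin θ hθr
    rw [hck'] at hm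
    simp only [Set.mem_insert_iff, Set.mem_singleton_iff] at hm
    rcases hm with h | h | h
    · linarith
    · linarith
    · exact h
  -- β = wJ α_k is a positive root with k-coefficient 1
  obtain ⟨lJ, hlJ, hlJp⟩ := R.WJ_word hwJmem
  obtain ⟨q, hqk, hq⟩ := R.word_support lJ (fun i hi => hlJ i hi) (R.α k)
  rw [hlJp] at hq
  set β := R.toLin wJ (R.α k) with hβ_def
  have hβr : R.isRoot β := R.root_inv wJ _ (R.root_simple k)
  have hβc : β = ∑ t, ((if t = k then 1 else 0) + q t) • R.α t := by
    rw [hq]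
    simp [add_smul, Finset.sum_add_distrib, ite_smul, Finset.sum_ite_eq']
  have hβpos : R.IsPos β := by
    rcases R.pos_or_negpos hβr with hp | hn
    · exact hp
    · exfalso
      obtain ⟨_, n, hn'⟩ := hn
      have h1 : ∑ t, (n t : ℚ) • R.α t
          = ∑ t, (-((if t = k then 1 else 0) + q t)) • R.α t := by
        rw [← hn', hβc, ← Finset.sum_neg_distrib]
        exact Finset.sum_congr rfl fun t _ => (neg_smul _ _).symm
      have h2 := congrFun (R.coeff_unique h1) k
      simp [hqk] at h2
      have := Nat.cast_nonneg (α := ℚ) (n k)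
      linarith
  obtain ⟨_, m, hm⟩ := hβpos
  have hmc := congrFun (R.coeff_unique (hm.symm.trans hβc))
  have hmk : (m k : ℚ) = 1 := by
    have := hmc k
    simp only [if_pos rfl, hqk, add_zero] at this
    exact this
  -- θ - β has nonnegative coefficients e with e k = 0
  obtain ⟨e, he⟩ := hhigh β ⟨hβr, m, hm⟩
  have hθβ : θ = β + ∑ i, (e i : ℚ) • R.α i := by rw [← he]; abel
  have hce : ∀ i, (c i : ℚ) = (m i : ℚ) + (e i : ℚ) := by
    have h1 : ∑ i, (c i : ℚ) • R.α i = ∑ i, ((m i : ℚ) + (e i : ℚ)) • R.α i := by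
      rw [← hc, hθβ, hm]
      simp [add_smul, Finset.sum_add_distrib]
    exact fun i => congrFun (R.coeff_unique h1) i
  have hek : (e k : ℚ) = 0 := by
    have := hce k
    rw [hck, hmk] at this
    linarith
  -- wJ⁻¹ sends every α_i (i ≠ k) to a negative root
  have hneg : ∀ i, i ≠ k → R.IsPos (-(R.toLin wJ⁻¹ (R.α i))) := by
    intro i hi
    rcases R.pos_or_negpos (R.root_inv wJ⁻¹ _ (R.root_simple i)) with hp | hn
    · exfalso
      have hlt := R.len_lt_of_pos hsl hp
      have hmem : wJ⁻¹ * R.s i ∈ R.WJ {i | i ≠ k} :=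
        mul_mem (inv_mem hwJmem) (Subgroup.subset_closure ⟨i, hi, rfl⟩)
      have hle := hwJmax _ hmem
      rw [R.len_inv] at hlt
      omega
    · exact hn
  -- all e i = 0
  have he0 : ∀ i, e i = 0 := by
    by_contra hcon
    push_neg at hcon
    obtain ⟨j, hj⟩ := hcon
    obtain ⟨lJ2, hlJ2, hlJ2p⟩ := R.WJ_word (inv_mem hwJmem)
    have hcoef : ∀ i : I, ∃ n : I → ℚ, (∀ t, 0 ≤ n t) ∧ n k = 0 ∧
        ((e i : ℚ)) • R.toLin wJ⁻¹ (R.α i) = ∑ t, (-((e i : ℚ) * n t)) • R.α t ∧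
        (e i ≠ 0 → ∃ t, t ≠ k ∧ 0 < n t) := by
      intro i
      by_cases hik : i = k
      · subst hik
        exact ⟨0, fun t => le_refl 0, rfl, by simp [hek],
          fun h => absurd (Nat.cast_eq_zero.mp hek) h⟩
      · obtain ⟨hrn, n, hn⟩ := hneg i hik
        obtain ⟨q2, hq2k, hq2⟩ := R.word_support lJ2 (fun i' hi' => hlJ2 i' hi') (R.α i)
        rw [hlJ2p] at hq2
        have hcomb : ∑ t, (n t : ℚ) • R.α t
            = ∑ t, (-((if t = i then 1 else 0) + q2 t)) • R.α t := by
          rw [← hn, hq2]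
          have h9 : R.α i + ∑ t, q2 t • R.α t
              = ∑ t, ((if t = i then 1 else 0) + q2 t) • R.α t := by
            simp [add_smul, ite_smul, Finset.sum_add_distrib, Finset.sum_ite_eq']
          rw [h9, ← Finset.sum_neg_distrib]
          exact Finset.sum_congr rfl fun t _ => (neg_smul _ _).symm
        have hnk : (n k : ℚ) = 0 := by
          have h3 := congrFun (R.coeff_unique hcomb) k
          rw [if_neg (Ne.symm hik), hq2k] at h3
          simpa using h3
        refine ⟨fun t => (n t : ℚ), fun t => Nat.cast_nonneg _, hnk, ?_, ?_⟩
        · have hf : R.toLin wJ⁻¹ (R.α i) = -∑ t, (n t : ℚ) • R.α t := by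
            rw [← hn, neg_neg]
          rw [hf, smul_neg, Finset.smul_sum, ← Finset.sum_neg_distrib]
          exact Finset.sum_congr rfl fun t _ => by rw [smul_smul, neg_smul]
        · intro hei
          by_contra hno
          push_neg at hno
          have hall : ∀ t, (n t : ℚ) = 0 := by
            intro t
            by_cases htk : t = k
            · rw [htk]; exact hnk
            · have h4 := hno t htk
              have h5 := Nat.cast_nonneg (α := ℚ) (n t)
              linarith
          apply R.root_ne_zero hrn
          rw [hn]
          exact Finset.sum_eq_zero fun t _ => by rw [hall t, zero_smul]
    choose nf hnn hnk2 heq hpos using hcoef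
    -- δ = wJ⁻¹ θ
    have hδ : R.toLin wJ⁻¹ θ = R.α k + ∑ t, (-(∑ i, (e i : ℚ) * nf i t)) • R.α t := by
      rw [hθβ, map_add, map_sum]
      congr 1
      · exact R.toLin_inv wJ (R.α k)
      · simp only [map_smul]
        rw [Finset.sum_congr rfl (fun i _ => heq i), Finset.sum_comm]
        refine Finset.sum_congr rfl fun t _ => ?_
        rw [← Finset.sum_smul]
        congr 1
        rw [← Finset.sum_neg_distrib]
    set E : I → ℚ := fun t => ∑ i, (e i : ℚ) * nf i t with hE_def
    have hEnn : ∀ t, 0 ≤ E t := fun t =>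
      Finset.sum_nonneg fun i _ => mul_nonneg (Nat.cast_nonneg _) (hnn i t)
    have hEk : E k = 0 := by
      simp only [hE_def]
      exact Finset.sum_eq_zero fun i _ => by rw [hnk2 i, mul_zero]
    obtain ⟨t0, ht0k, ht0⟩ := hpos j hj
    have hEt0 : 0 < E t0 := by
      have h6 : (e j : ℚ) * nf j t0 ≤ E t0 :=
        Finset.single_le_sum (fun i _ => mul_nonneg (Nat.cast_nonneg _) (hnn i t0))
          (Finset.mem_univ j)
      have hej : (0:ℚ) < (e j : ℚ) := by
        exact_mod_cast Nat.pos_of_ne_zero hj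
      exact lt_of_lt_of_le (mul_pos hej ht0) h6
    have hδr : R.isRoot (R.toLin wJ⁻¹ θ) := R.root_inv wJ⁻¹ θ hθr
    have hδc : R.toLin wJ⁻¹ θ = ∑ t, ((if t = k then 1 else 0) - E t) • R.α t := by
      rw [hδ]
      simp only [hE_def, sub_smul, ite_smul, Finset.sum_sub_distrib, Finset.sum_ite_eq',
        Finset.mem_univ, if_true, neg_smul, Finset.sum_neg_distrib, one_smul, zero_smul]
      abel
    rcases R.pos_or_negpos hδr with ⟨_, p, hp⟩ | ⟨_, p, hp⟩
    · have h7 := congrFun (R.coeff_unique (hp.symm.trans hδc)) t0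
      rw [if_neg ht0k] at h7
      have := Nat.cast_nonneg (α := ℚ) (p t0)
      linarith
    · have hδc' : -(R.toLin wJ⁻¹ θ) = ∑ t, (E t - (if t = k then 1 else 0)) • R.α t := by
        rw [hδc, ← Finset.sum_neg_distrib]
        exact Finset.sum_congr rfl fun t _ => by rw [← neg_smul, neg_sub]
      have h7 := congrFun (R.coeff_unique (hp.symm.trans hδc')) k
      rw [if_pos rfl, hEk] at h7
      have := Nat.cast_nonneg (α := ℚ) (p k)
      linarith
  -- θ = β and conclusion
  have hθeq : θ = β := by
    rw [hθβ]
    have : ∑ i, (e i : ℚ) • R.α i = 0 :=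
      Finset.sum_eq_zero fun i _ => by rw [he0 i, Nat.cast_zero, zero_smul]
    rw [this, add_zero]
  have hrefl : R.refl θ = wJ * R.s k * wJ⁻¹ := by
    rw [hθeq, hβ_def]
    exact R.refl_eq_conj wJ k
  rw [hrefl, inv_mul_cancel_left]
  exact inv_mem hwJmem
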